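/- Let T be a bounded linear isometry of the complex Banach space c₀ into itself, and let k be an index such that |(T e_k)(k)| = 1. Then for every x ∈ c₀ with x(k) = 0, one has (T x)(k) = 0. -/
import Mathlib

open ZeroAtInfty Filter Topology

/-- `c₀` is modelled as `C₀(ℕ, ℂ)`, the space of sequences of complex numbers tending to `0`
with the supremum norm.  `stdBasis k` is the standard unit vector which is `1` in coordinate `k`
and `0` elsewhere (indices are `0`-based, so `stdBasis (k-1)` is the paper's `e_k`). -/
noncomputable def stdBasis (k : ℕ) : C₀(ℕ, ℂ) :=
  { toFun := fun j => if j = k then 1 else 0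
    continuous_toFun := continuous_of_discreteTopology
    zero_at_infty' := by
      rw [cocompact_eq_atTop]
      refine tendsto_nhds_of_eventually_eq ?_
      filter_upwards [eventually_gt_atTop k] with j hj
      simp [Nat.ne_of_gt hj] }

lemma c0_coord_le (f : C₀(ℕ, ℂ)) (j : ℕ) : ‖f j‖ ≤ ‖f‖ := by
  rw [← ZeroAtInftyContinuousMap.norm_toBCF_eq_norm]
  exact BoundedContinuousFunction.norm_coe_le_norm f.toBCF j

lemma c0_norm_le (f : C₀(ℕ, ℂ)) (C : ℝ) (h0 : 0 ≤ C) (h : ∀ j, ‖f j‖ ≤ C) : ‖f‖ ≤ C := by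
  rw [← ZeroAtInftyContinuousMap.norm_toBCF_eq_norm]
  exact BoundedContinuousFunction.norm_le h0 |>.2 h

lemma key (T : C₀(ℕ, ℂ) →L[ℂ] C₀(ℕ, ℂ)) (hiso : ∀ x : C₀(ℕ, ℂ), ‖T x‖ = ‖x‖) (k : ℕ)
    (hk : ‖(T (stdBasis k)) k‖ = 1) (x : C₀(ℕ, ℂ)) (hxk : x k = 0) (hx1 : ‖x‖ ≤ 1) :
    (T x) k = 0 := by
  set a := (T (stdBasis k)) k with ha
  set b := (T x) k with hb
  have hbnorm : ‖b‖ ≤ 1 := le_trans (c0_coord_le _ _) (by rw [hiso]; exact hx1)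
  set c : ℂ := a * (starRingEnd ℂ) b with hc
  have hz : ‖stdBasis k + c • x‖ ≤ 1 := by
    apply c0_norm_le _ _ zero_le_one
    intro j
    rcases eq_or_ne j k with rfl | hj
    · simp [stdBasis, hxk]
    · have : (stdBasis k) j = 0 := by simp [stdBasis, hj]
      have hcx : ‖(stdBasis k + c • x) j‖ = ‖c‖ * ‖x j‖ := by
        simp [this, norm_smul]
      rw [hcx]
      have hcle : ‖c‖ ≤ 1 := by
        rw [hc]
        calc ‖a * (starRingEnd ℂ) b‖ = ‖a‖ * ‖b‖ := by simp
        _ ≤ 1 * 1 := by apply mul_le_mul (le_of_eq hk) hbnorm (norm_nonneg _) zero_le_one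
        _ = 1 := by ring
      calc ‖c‖ * ‖x j‖ ≤ 1 * 1 :=
        mul_le_mul hcle (le_trans (c0_coord_le _ _) hx1) (norm_nonneg _) zero_le_one
      _ = 1 := by ring
  have hT : ‖T (stdBasis k + c • x)‖ ≤ 1 := by rw [hiso]; exact hz
  have hcoord : (T (stdBasis k + c • x)) k = a + c * b := by
    simp [map_add, map_smul, ← ha, ← hb, smul_eq_mul]
  have h1 : ‖a + c * b‖ ≤ 1 := by
    rw [← hcoord]; exact le_trans (c0_coord_le _ _) hT
  have h2 : a + c * b = a * (1 + (‖b‖ : ℂ)^2) := by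
    rw [hc, mul_assoc]
    have : (starRingEnd ℂ) b * b = (‖b‖ : ℂ)^2 := by simpa using RCLike.conj_mul b
    rw [this]; push_cast; ring
  rw [h2] at h1
  have h3 : ‖a * (1 + (‖b‖ : ℂ)^2)‖ = 1 + ‖b‖^2 := by
    rw [norm_mul, hk, one_mul]
    have : (1 + (‖b‖ : ℂ)^2) = ((1 + ‖b‖^2 : ℝ) : ℂ) := by push_cast; ring
    rw [this, Complex.norm_real, Real.norm_of_nonneg (by positivity)]
  rw [h3] at h1
  have : ‖b‖^2 ≤ 0 := by linarith
  have : ‖b‖ = 0 := by nlinarith [norm_nonneg b]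
  simpa using this

/-- If `T` is a bounded linear isometry of `c₀` with `|(T e_k)(k)| = 1`, then `(T x)(k) = 0`
for every `x` with `x(k) = 0`. -/
theorem c0_isometry_coordinate_vanishes
    (T : C₀(ℕ, ℂ) →L[ℂ] C₀(ℕ, ℂ)) (hiso : ∀ x : C₀(ℕ, ℂ), ‖T x‖ = ‖x‖) (k : ℕ)
    (hk : ‖(T (stdBasis k)) k‖ = 1) :
    ∀ x : C₀(ℕ, ℂ), x k = 0 → (T x) k = 0 := by
  intro x hxk
  rcases eq_or_ne x 0 with rfl | hx0
  · simp
  · have hnx : (0:ℝ) < ‖x‖ := norm_pos_iff.mpr hx0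
    set y : C₀(ℕ, ℂ) := (‖x‖⁻¹ : ℂ) • x with hy
    have hyk : y k = 0 := by simp [hy, hxk]
    have hy1 : ‖y‖ ≤ 1 := by
      rw [hy, norm_smul ((‖x‖:ℂ)⁻¹) x]
      simp [Real.norm_of_nonneg (le_of_lt (inv_pos.mpr hnx))]
      rw [inv_mul_cancel₀ (ne_of_gt hnx)]
    have := key T hiso k hk y hyk hy1
    have hTy : (T y) k = (‖x‖⁻¹ : ℂ) * (T x) k := by
      simp [hy, map_smul, smul_eq_mul]
    rw [hTy] at this
    exact (mul_eq_zero.mp this).resolve_left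
      (inv_ne_zero (Complex.ofReal_ne_zero.mpr (ne_of_gt hnx)))
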